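/- Let k be an infinite cardinal. Then there exists an Ulam (k, k⁺)-matrix over k⁺: a doubly indexed family (Π_{ξ,ρ})_{ξ<k, ρ<k⁺} of subsets of k⁺ such that (a) for each fixed ξ < k, the sets Π_{ξ,ρ} (ρ < k⁺) are pairwise disjoint, and (b) for each fixed ρ < k⁺, the complement k⁺ ∖ ⋃_{ξ<k} Π_{ξ,ρ} has cardinality at most k. -/

import Mathlib

open Set Cardinal

universe u

/-- existence of an Ulam `(k, k⁺)`-matrix over `k⁺`. -/
theorem stmt_8 (k : Cardinal.{u}) (hk : ℵ₀ ≤ k) :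
    ∃ P : k.ord.ToType → (Order.succ k).ord.ToType → Set (Order.succ k).ord.ToType,
      (∀ ξ, Pairwise fun ρ ρ' => Disjoint (P ξ ρ) (P ξ ρ')) ∧
      (∀ ρ, #((⋃ ξ, P ξ ρ)ᶜ : Set (Order.succ k).ord.ToType) ≤ k) := by
  set A := (Order.succ k).ord.ToType
  set K := k.ord.ToType
  -- for each β : A, an injection from Iio β into K
  have hemb : ∀ β : A, Nonempty (Iio β ↪ K) := by
    intro β
    rw [← Cardinal.le_def]
    rw [Cardinal.mk_ord_toType]
    exact (Order.lt_succ_iff.1 (Cardinal.mk_Iio_ord_toType β))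
  have f : ∀ β : A, Iio β ↪ K := fun β => (hemb β).some
  refine ⟨fun ξ ρ => {β | ∃ h : ρ < β, f β ⟨ρ, h⟩ = ξ}, ?_, ?_⟩
  · intro ξ ρ ρ' hne
    rw [Set.disjoint_left]
    rintro β ⟨h1, e1⟩ ⟨h2, e2⟩
    exact hne (congrArg Subtype.val ((f β).injective (e1.trans e2.symm)))
  · intro ρ
    have hsub : ((⋃ ξ, {β : A | ∃ h : ρ < β, f β ⟨ρ, h⟩ = ξ})ᶜ : Set A) ⊆ Iic ρ := by
      intro β hβ
      by_contra hle
      have h : ρ < β := lt_of_not_ge (fun h => hle (mem_Iic.2 h))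
      exact hβ (Set.mem_iUnion.2 ⟨f β ⟨ρ, h⟩, h, rfl⟩)
    calc #((⋃ ξ, {β : A | ∃ h : ρ < β, f β ⟨ρ, h⟩ = ξ})ᶜ : Set A) ≤ #(Iic ρ : Set A) :=
          Cardinal.mk_le_mk_of_subset hsub
      _ = #(Iio ρ : Set A) + #({ρ} : Set A) := by
          rw [← Cardinal.mk_union_of_disjoint (by simp), Set.Iio_union_right]
      _ ≤ k + k := by
          refine add_le_add ?_ ?_
          · exact Order.lt_succ_iff.1 (Cardinal.mk_Iio_ord_toType ρ)
          · simpa using hk.trans' Cardinal.one_le_aleph0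
      _ = k := Cardinal.add_eq_self hk
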